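/- There is a natural bijection between the group of characters and the Lie algebra of infinitesimal characters on \bar{T}(T(J)) given by the left half-shuffle fixed point equation: for every character \phi there exists a unique infinitesimal character \kappa such that \phi = \varepsilon + \kappa \prec \phi (equivalently \phi = \exp^{\prec}(\kappa)); conversely, for every infinitesimal character \kappa, the linear form \exp^{\prec}(\kappa) := \varepsilon + \sum_{n>0} \kappa^{\prec n} is a character. -/

import Mathlib

open scoped TensorProduct

noncomputable section
attribute [local instance] Classical.propDecidable

/-- Nonempty words over the alphabet `J`. -/
abbrev Word (J : Type) := {l : List J // l ≠ []}

/-- The double tensor algebra `T̄(T(J))` with the bar (concatenation) product. -/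
abbrev DT (K : Type) [Field K] (J : Type) := MonoidAlgebra K (FreeMonoid (Word J))

variable (K : Type) [Field K] (J : Type)

def wordElem (w : List J) : DT K J :=
  if h : w = [] then 1 else MonoidAlgebra.single (FreeMonoid.of (⟨w, h⟩ : Word J)) 1

def subword (w : List J) (S : Finset ℕ) : List J :=
  (S.sort (· ≤ ·)).filterMap (fun i => w[i]?)

def runs : List ℕ → List (List ℕ)
  | [] => []
  | a :: rest =>
    match runs rest with
    | [] => [[a]]
    | r :: rs => if a + 1 = r.headD 0 then (a :: r) :: rs else [a] :: r :: rs

def comps (n : ℕ) (S : Finset ℕ) : List (List ℕ) :=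
  runs ((List.range n).filter (fun i => decide (i ∉ S)))

def barElem (ws : List (List J)) : DT K J := (ws.map (wordElem K J)).prod

/-- The coproduct `δ` on a single word. -/
def deltaWord (w : List J) : DT K J ⊗[K] DT K J :=
  ∑ S ∈ (Finset.range w.length).powerset,
    wordElem K J (subword J w S) ⊗ₜ[K]
      barElem K J ((comps w.length S).map (fun c => c.filterMap (fun i => w[i]?)))

/-- The coproduct `δ`, extended multiplicatively. -/
def delta : DT K J →ₐ[K] (DT K J ⊗[K] DT K J) :=
  MonoidAlgebra.lift K _ (FreeMonoid (Word J)) (FreeMonoid.lift (fun a => deltaWord K J a.1))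

/-- The counit `ε`. -/
def counit : DT K J →ₐ[K] K :=
  MonoidAlgebra.lift K K (FreeMonoid (Word J)) (FreeMonoid.lift (fun _ => (0 : K)))

/-- Basis-linear extension of a function on the basis of `T̄(T(J))`. -/
def extend {M : Type} [AddCommMonoid M] [Module K M] (f : FreeMonoid (Word J) → M) :
    DT K J →ₗ[K] M :=
  (Finsupp.lift M K (FreeMonoid (Word J)) f).comp (MonoidAlgebra.coeffLinearEquiv K).toLinearMap

/-- The left half-unshuffle `δ_≺` on a word: the partial sum over subsets containing
the first letter. -/
def deltaPrecWord (w : List J) : DT K J ⊗[K] DT K J :=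
  ∑ S ∈ ((Finset.range w.length).powerset.filter (fun S => 0 ∈ S)),
    wordElem K J (subword J w S) ⊗ₜ[K]
      barElem K J ((comps w.length S).map (fun c => c.filterMap (fun i => w[i]?)))

/-- The right half-unshuffle `δ_≻` on a word: the partial sum over subsets not containing
the first letter. -/
def deltaSuccWord (w : List J) : DT K J ⊗[K] DT K J :=
  ∑ S ∈ ((Finset.range w.length).powerset.filter (fun S => 0 ∉ S)),
    wordElem K J (subword J w S) ⊗ₜ[K]
      barElem K J ((comps w.length S).map (fun c => c.filterMap (fun i => w[i]?)))

/-- `δ_≺` extended to `T̄(T(J))` by `δ_≺(w₁|⋯|w_m) = δ_≺(w₁)δ(w₂)⋯δ(w_m)`. -/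
def deltaPrec : DT K J →ₗ[K] DT K J ⊗[K] DT K J :=
  extend K J (fun g =>
    match FreeMonoid.toList g with
    | [] => 0
    | a :: as => deltaPrecWord K J a.1 * delta K J (MonoidAlgebra.single (FreeMonoid.ofList as) 1))

/-- `δ_≻` extended to `T̄(T(J))` by `δ_≻(w₁|⋯|w_m) = δ_≻(w₁)δ(w₂)⋯δ(w_m)`. -/
def deltaSucc : DT K J →ₗ[K] DT K J ⊗[K] DT K J :=
  extend K J (fun g =>
    match FreeMonoid.toList g with
    | [] => 0
    | a :: as => deltaSuccWord K J a.1 * delta K J (MonoidAlgebra.single (FreeMonoid.ofList as) 1))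


/-- Convolution product `α ⋆ β = m_K ∘ (α ⊗ β) ∘ δ` on linear forms. -/
def conv (α β : DT K J →ₗ[K] K) : DT K J →ₗ[K] K :=
  (LinearMap.mul' K K).comp ((TensorProduct.map α β).comp (delta K J).toLinearMap)

/-- Left half-shuffle `α ≺ β = m_K ∘ (α ⊗ β) ∘ δ_≺` on linear forms. -/
def cprec (α β : DT K J →ₗ[K] K) : DT K J →ₗ[K] K :=
  (LinearMap.mul' K K).comp ((TensorProduct.map α β).comp (deltaPrec K J))

/-- Right half-shuffle `α ≻ β = m_K ∘ (α ⊗ β) ∘ δ_≻` on linear forms. -/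
def csucc (α β : DT K J →ₗ[K] K) : DT K J →ₗ[K] K :=
  (LinearMap.mul' K K).comp ((TensorProduct.map α β).comp (deltaSucc K J))

/-- The counit as a linear form. -/
def epsL : DT K J →ₗ[K] K := (counit K J).toLinearMap


/-- The degree (total word length) of a basis element of `T̄(T(J))`. -/
def deg (g : FreeMonoid (Word J)) : ℕ := ((FreeMonoid.toList g).map (fun a => a.1.length)).sum

/-- Iterated left half-shuffle powers `x^{≺n}`. -/
def precPow (x : DT K J →ₗ[K] K) : ℕ → (DT K J →ₗ[K] K)
  | 0 => epsL K J
  | n + 1 => cprec K J x (precPow x n)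

/-- Iterated right half-shuffle powers `x^{≻n}`. -/
def succPow (x : DT K J →ₗ[K] K) : ℕ → (DT K J →ₗ[K] K)
  | 0 => epsL K J
  | n + 1 => csucc K J (succPow x n) x

/-- Iterated convolution powers `x^{⋆n}`. -/
def starPow (x : DT K J →ₗ[K] K) : ℕ → (DT K J →ₗ[K] K)
  | 0 => epsL K J
  | n + 1 => conv K J x (starPow x n)

/-- The ordered exponential `exp^≺(x) = ε + ∑_{n>0} x^{≺n}`, defined degreewise
(on a homogeneous component of degree `d` only the terms with `n ≤ d` contribute). -/
def expPrec (x : DT K J →ₗ[K] K) : DT K J →ₗ[K] K :=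
  extend K J (fun g =>
    ∑ n ∈ Finset.range (deg J g + 1), precPow K J x n (MonoidAlgebra.single g 1))

/-- The ordered exponential `exp^≻(x) = ε + ∑_{n>0} x^{≻n}`, defined degreewise. -/
def expSucc (x : DT K J →ₗ[K] K) : DT K J →ₗ[K] K :=
  extend K J (fun g =>
    ∑ n ∈ Finset.range (deg J g + 1), succPow K J x n (MonoidAlgebra.single g 1))


/-- A character on `T̄(T(J))`: a unital, multiplicative linear form. -/
def IsChar (φ : DT K J →ₗ[K] K) : Prop :=
  φ 1 = 1 ∧ ∀ a b : DT K J, φ (a * b) = φ a * φ b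

/-- An infinitesimal character on `T̄(T(J))`: a linear form vanishing on the unit and on
all bar products of elements of `T(T(J))` (the augmentation ideal). -/
def IsInfChar (κ : DT K J →ₗ[K] K) : Prop :=
  κ 1 = 0 ∧ ∀ a b : DT K J, counit K J a = 0 → counit K J b = 0 → κ (a * b) = 0

section Aux
variable {K : Type} [Field K] {J : Type}

theorem wordElem_nil : wordElem K J [] = 1 := by simp [wordElem]

theorem wordElem_cons {w : List J} (h : w ≠ []) :
    wordElem K J w = MonoidAlgebra.single (FreeMonoid.of (⟨w, h⟩ : Word J)) 1 := by
  simp [wordElem, h]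

theorem extend_single {M : Type} [AddCommMonoid M] [Module K M]
    (f : FreeMonoid (Word J) → M) (g : FreeMonoid (Word J)) (c : K) :
    extend K J f (MonoidAlgebra.single g c) = c • f g := by
  simp only [extend]
  rw [LinearMap.comp_apply, LinearEquiv.coe_coe]
  change Finsupp.lift M K _ f (Finsupp.single g c) = _
  rw [Finsupp.lift_apply, Finsupp.sum_single_index] <;> simp

def barMon (ws : List (List J)) : FreeMonoid (Word J) :=
  FreeMonoid.ofList (ws.filterMap (fun w => if h : w = [] then none else some ⟨w, h⟩))

theorem barElem_eq (ws : List (List J)) :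
    barElem K J ws = MonoidAlgebra.single (barMon (J := J) ws) 1 := by
  induction ws with
  | nil => simp [barElem, barMon, MonoidAlgebra.one_def]
  | cons w ws ih =>
    by_cases h : w = []
    · subst h
      simp [barElem, barMon, wordElem_nil] at *
      simpa [List.map_cons] using ih
    · have : barElem K J (w :: ws) = wordElem K J w * barElem K J ws := by
        simp [barElem]
      rw [this, ih, wordElem_cons h, MonoidAlgebra.single_mul_single, one_mul]
      congr 1
      simp [barMon, h, FreeMonoid.ofList_cons]

theorem deg_mul (g h : FreeMonoid (Word J)) : deg J (g * h) = deg J g + deg J h := by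
  simp [deg, FreeMonoid.toList_mul]

theorem deg_one : deg J (1 : FreeMonoid (Word J)) = 0 := rfl

theorem deg_barMon (ws : List (List J)) :
    deg J (barMon (J := J) ws) = (ws.map List.length).sum := by
  induction ws with
  | nil => rfl
  | cons w ws ih =>
    by_cases h : w = []
    · subst h; simpa [barMon, deg] using ih
    · simp [barMon, deg, h] at *
      omega

theorem counit_single (g : FreeMonoid (Word J)) (c : K) :
    counit K J (MonoidAlgebra.single g c) = if g = 1 then c else 0 := by
  classical
  rw [counit, MonoidAlgebra.lift_single]
  rcases eq_or_ne g 1 with rfl | hg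
  · simp
  · have : FreeMonoid.toList g ≠ [] := by
      intro h; exact hg (FreeMonoid.toList.injective (by simp [h]))
    rw [FreeMonoid.lift_apply]
    cases hl : FreeMonoid.toList g with
    | nil => exact absurd hl this
    | cons a as => simp [hg, hl]

end Aux
theorem runs_flatten (l : List ℕ) : (runs l).flatten = l := by
  induction l with
  | nil => rfl
  | cons a rest ih =>
    rw [runs]
    rcases h : runs rest with _ | ⟨r, rs⟩ <;> rw [h] at ih
    · simp at ih; simp [← ih]
    · by_cases hc : a + 1 = r.headD 0 <;> simp [List.headD, hc, ← ih] <;> simp [List.headD] at hc <;> simp [hc]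

theorem runs_range' (a n : ℕ) (hn : 0 < n) : runs (List.range' a n) = [List.range' a n] := by
  induction n generalizing a with
  | zero => omega
  | succ n ih =>
    rw [List.range'_succ, runs]
    rcases Nat.eq_zero_or_pos n with rfl | hn'
    · simp [runs]
    · rw [ih (a+1) hn']
      have : (List.range' (a+1) n).headD 0 = a + 1 := by
        cases n with | zero => omega | succ m => simp [List.range'_succ]
      simp [List.headD] at this
      simp [List.headD, this]

theorem comps_flatten (n : ℕ) (S : Finset ℕ) :
    (comps n S).flatten = (List.range n).filter (fun i => decide (i ∉ S)) := by
  rw [comps, runs_flatten]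

theorem mem_comps_lt {n : ℕ} {S : Finset ℕ} {c : List ℕ} (hc : c ∈ comps n S) {i : ℕ}
    (hi : i ∈ c) : i < n ∧ i ∉ S := by
  have : i ∈ (comps n S).flatten := List.mem_flatten.2 ⟨c, hc, hi⟩
  rw [comps_flatten] at this
  have := List.mem_filter.1 this
  simpa using ⟨List.mem_range.1 this.1, by simpa using this.2⟩

theorem comps_full (n : ℕ) : comps n (Finset.range n) = [] := by
  have : (List.range n).filter (fun i => decide (i ∉ Finset.range n)) = [] := by
    apply List.filter_eq_nil_iff.2
    intro i hi
    simp [List.mem_range.1 hi]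
  rw [comps, this, runs]

theorem comps_empty (n : ℕ) (hn : 0 < n) : comps n (∅ : Finset ℕ) = [List.range n] := by
  have : (List.range n).filter (fun i => decide (i ∉ (∅ : Finset ℕ))) = List.range n := by
    apply List.filter_eq_self.2; simp
  rw [comps, this, List.range_eq_range', runs_range' _ _ hn, ← List.range_eq_range']

theorem filterMap_getElem {J : Type} (w : List J) (l : List ℕ) (h : ∀ i ∈ l, i < w.length) :
    (l.filterMap (fun i => w[i]?)).length = l.length := by
  induction l with
  | nil => rfl
  | cons a t ih =>
    have ha : a < w.length := h a List.mem_cons_self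
    rw [List.filterMap_cons]
    rw [List.getElem?_eq_getElem ha]
    simp only [List.length_cons]
    rw [ih (fun i hi => h i (List.mem_cons_of_mem a hi))]

theorem filterMap_range_getElem {J : Type} (w : List J) :
    (List.range w.length).filterMap (fun i => w[i]?) = w := by
  induction w with
  | nil => rfl
  | cons a t ih =>
    rw [List.length_cons, List.range_succ_eq_map, List.filterMap_cons, List.filterMap_map]
    simp only [List.getElem?_cons_zero]
    have : (fun i => (a :: t)[i+1]?) = (fun i => t[i]?) := by
      funext i; simp
    show a :: List.filterMap _ (List.range t.length) = a :: t
    rw [show ((fun i => (a::t)[i]?) ∘ Nat.succ) = fun i => t[i]? from by funext i; simp]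
    rw [ih]

theorem subword_empty {J : Type} (w : List J) : subword J w ∅ = [] := by
  simp [subword]

theorem subword_full {J : Type} (w : List J) : subword J w (Finset.range w.length) = w := by
  rw [subword, Finset.sort_range, filterMap_range_getElem]

theorem subword_length {J : Type} (w : List J) {S : Finset ℕ}
    (hS : S ⊆ Finset.range w.length) : (subword J w S).length = S.card := by
  rw [subword, filterMap_getElem]
  · exact Finset.length_sort _
  · intro i hi
    exact List.mem_range.1 (by simpa using hS (Finset.mem_sort (α := ℕ) (· ≤ ·) |>.1 hi))

theorem subword_ne_nil {J : Type} (w : List J) {S : Finset ℕ}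
    (hS : S ⊆ Finset.range w.length) (h0 : S.Nonempty) : subword J w S ≠ [] := by
  intro h
  have := subword_length w hS
  rw [h] at this
  simp at this
  have := h0.card_pos
  omega

section Aux2
variable {K : Type} [Field K] {J : Type}

theorem length_filter_not_mem (n : ℕ) (S : Finset ℕ) (hS : S ⊆ Finset.range n) :
    ((List.range n).filter (fun i => decide (i ∉ S))).length = n - S.card := by
  classical
  have hnd : ((List.range n).filter (fun i => decide (i ∉ S))).Nodup :=
    List.nodup_range.filter _
  have hfr : (List.range n).toFinset = Finset.range n := by
    ext i; simp
  rw [← List.toFinset_card_of_nodup hnd, List.toFinset_filter, hfr]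
  have : (Finset.range n).filter (fun i => i ∉ S) = Finset.range n \ S := by
    ext i; simp [Finset.mem_sdiff]
  rw [show ((Finset.range n).filter fun i => (decide (i ∉ S) = true)) =
        ((Finset.range n).filter fun i => i ∉ S) from by simp, this,
    Finset.card_sdiff_of_subset hS, Finset.card_range]

theorem sum_lengths_comps (w : List J) {S : Finset ℕ} (hS : S ⊆ Finset.range w.length) :
    (((comps w.length S).map (fun c => c.filterMap (fun i => w[i]?))).map List.length).sum
      = w.length - S.card := by
  rw [List.map_map]
  have h1 : ∀ c ∈ comps w.length S,
      (List.length ∘ fun c => c.filterMap (fun i => w[i]?)) c = List.length c := by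
    intro c hc
    exact filterMap_getElem w c (fun i hi => (mem_comps_lt hc hi).1)
  rw [List.map_congr_left h1]
  have : ((comps w.length S).map List.length).sum = (comps w.length S).flatten.length := by
    rw [List.length_flatten]
  rw [this, comps_flatten, length_filter_not_mem _ _ hS]

theorem counit_wordElem (w : List J) :
    counit K J (wordElem K J w) = if w = [] then 1 else 0 := by
  by_cases h : w = []
  · simp [h, wordElem_nil]
  · rw [wordElem_cons h, counit_single]
    have : FreeMonoid.of (⟨w, h⟩ : Word J) ≠ 1 := by
      intro hc
      have := congrArg FreeMonoid.toList hc
      simp [FreeMonoid.toList_of, FreeMonoid.toList_one] at this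
    simp [h, this]

theorem delta_word (a : Word J) :
    delta K J (MonoidAlgebra.single (FreeMonoid.of a) 1) = deltaWord K J a.1 := by
  rw [delta, MonoidAlgebra.lift_single, one_smul, FreeMonoid.lift_eval_of]

theorem delta_single_cons (a : Word J) (as : List (Word J)) :
    delta K J (MonoidAlgebra.single (FreeMonoid.ofList (a :: as)) 1)
      = deltaWord K J a.1 * delta K J (MonoidAlgebra.single (FreeMonoid.ofList as) 1) := by
  have : (MonoidAlgebra.single (FreeMonoid.ofList (a :: as)) (1:K))
      = MonoidAlgebra.single (FreeMonoid.of a) 1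
        * MonoidAlgebra.single (FreeMonoid.ofList as) 1 := by
    rw [MonoidAlgebra.single_mul_single, one_mul]
    rfl
  rw [this, map_mul, delta_word]

theorem deltaPrec_one : deltaPrec K J (MonoidAlgebra.single (1 : FreeMonoid (Word J)) 1) = 0 := by
  rw [deltaPrec, extend_single, one_smul]
  rfl

theorem deltaPrec_cons (a : Word J) (as : List (Word J)) :
    deltaPrec K J (MonoidAlgebra.single (FreeMonoid.ofList (a :: as)) 1)
      = deltaPrecWord K J a.1 * delta K J (MonoidAlgebra.single (FreeMonoid.ofList as) 1) := by
  rw [deltaPrec, extend_single, one_smul]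
  rfl

theorem barElem_singleton (w : List J) : barElem K J [w] = wordElem K J w := by
  simp [barElem]

theorem counit_delta_word (a : Word J) :
    (Algebra.TensorProduct.map (counit K J) (AlgHom.id K (DT K J))) (deltaWord K J a.1)
      = (1 : K) ⊗ₜ[K] wordElem K J a.1 := by
  rw [deltaWord, map_sum]
  rw [Finset.sum_eq_single (∅ : Finset ℕ)]
  · rw [Algebra.TensorProduct.map_tmul, subword_empty, wordElem_nil, map_one]
    have hlen : 0 < a.1.length := List.length_pos_iff.2 a.2
    rw [comps_empty _ hlen, List.map_cons, List.map_nil, filterMap_range_getElem,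
      barElem_singleton]
    rfl
  · intro S hS hne
    rw [Algebra.TensorProduct.map_tmul]
    have hsub : S ⊆ Finset.range a.1.length := Finset.mem_powerset.1 hS
    have : counit K J (wordElem K J (subword J a.1 S)) = 0 := by
      rw [counit_wordElem]
      simp [subword_ne_nil a.1 hsub (Finset.nonempty_iff_ne_empty.2 hne)]
    rw [this, TensorProduct.zero_tmul]
  · intro h
    exact absurd (Finset.empty_mem_powerset _) h

/-- The counit axiom: `(ε ⊗ id) ∘ δ = 1 ⊗ ·` as algebra maps. -/
theorem counit_delta_algHom :
    ((Algebra.TensorProduct.map (counit K J) (AlgHom.id K (DT K J))).comp (delta K J))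
      = (Algebra.TensorProduct.includeRight : DT K J →ₐ[K] K ⊗[K] DT K J) := by
  apply MonoidAlgebra.algHom_ext ?_ (Subsingleton.elim _ _)
  intro x
  rw [← FreeMonoid.ofList_toList x]
  induction FreeMonoid.toList x with
  | nil =>
    rw [show (MonoidAlgebra.single (FreeMonoid.ofList ([] : List (Word J))) (1:K)) = 1 from rfl,
      map_one, map_one]
  | cons a as ih =>
    rw [show (MonoidAlgebra.single (FreeMonoid.ofList (a :: as)) (1:K))
        = MonoidAlgebra.single (FreeMonoid.of a) 1
          * MonoidAlgebra.single (FreeMonoid.ofList as) 1 from by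
      rw [MonoidAlgebra.single_mul_single, one_mul]; rfl]
    rw [map_mul, map_mul, ih]
    congr 1
    rw [AlgHom.comp_apply, delta_word, counit_delta_word]
    rw [wordElem_cons a.2]
    rfl

theorem counit_delta_apply (α : DT K J →ₗ[K] K) (x : DT K J) :
    LinearMap.mul' K K (TensorProduct.map (epsL K J) α (delta K J x)) = α x := by
  have h1 : TensorProduct.map (epsL K J) α
      = (TensorProduct.map LinearMap.id α).comp (TensorProduct.map (epsL K J) LinearMap.id) := by
    rw [← TensorProduct.map_comp, LinearMap.id_comp, LinearMap.comp_id]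
  have h2 : TensorProduct.map (epsL K J) LinearMap.id (delta K J x) = (1 : K) ⊗ₜ[K] x := by
    have := congrArg (fun f => (AlgHom.toLinearMap f) x) (counit_delta_algHom (K := K) (J := J))
    simp at this; exact this
  rw [h1, LinearMap.comp_apply, h2, TensorProduct.map_tmul, LinearMap.mul'_apply,
    LinearMap.id_apply, one_mul]

end Aux2
section Aux3
variable {K : Type} [Field K] {J : Type}

theorem single_eq_smul (g : FreeMonoid (Word J)) (c : K) :
    (MonoidAlgebra.single g c : DT K J) = c • MonoidAlgebra.single g 1 := by
  rw [MonoidAlgebra.smul_single', mul_one]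

theorem single_eq_smul' (g : FreeMonoid (Word J)) (c : K) :
    (MonoidAlgebra.single g c : DT K J) = c • MonoidAlgebra.single g 1 :=
  single_eq_smul g c

theorem ofList_ne_one {l : List (Word J)} (h : l ≠ []) : FreeMonoid.ofList l ≠ 1 := by
  intro hc
  exact h (by simpa using congrArg FreeMonoid.toList hc)

theorem toList_single_mul (g h : FreeMonoid (Word J)) :
    FreeMonoid.toList (g * h) = FreeMonoid.toList g ++ FreeMonoid.toList h := rfl

theorem infChar_vanish {κ : DT K J →ₗ[K] K} (hκ : IsInfChar K J κ)
    (g : FreeMonoid (Word J)) (hg : 2 ≤ (FreeMonoid.toList g).length) :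
    κ (MonoidAlgebra.single g 1) = 0 := by
  rcases hl : FreeMonoid.toList g with _ | ⟨a, _ | ⟨b, rest⟩⟩
  · rw [hl] at hg; simp at hg
  · rw [hl] at hg; simp at hg
  · have hg2 : g = FreeMonoid.of a * FreeMonoid.ofList (b :: rest) := by
      apply FreeMonoid.toList.injective
      rw [hl]; rfl
    have hsplit : (MonoidAlgebra.single g 1 : DT K J)
        = MonoidAlgebra.single (FreeMonoid.of a) 1
          * MonoidAlgebra.single (FreeMonoid.ofList (b :: rest)) 1 := by
      rw [MonoidAlgebra.single_mul_single, one_mul, hg2]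
    rw [hsplit]
    apply hκ.2
    · rw [counit_single]
      have : FreeMonoid.of a ≠ 1 := by
        intro hc
        simpa using congrArg FreeMonoid.toList hc
      simp [this]
    · rw [counit_single]
      simp [ofList_ne_one (List.cons_ne_nil b rest)]

/-- Leibniz-type formula for maps vanishing on `1` and on products of two or more words. -/
theorem kappa_mul_eq {κ : DT K J →ₗ[K] K} (h1 : κ 1 = 0)
    (h2 : ∀ g : FreeMonoid (Word J), 2 ≤ (FreeMonoid.toList g).length →
      κ (MonoidAlgebra.single g 1) = 0) (a b : DT K J) :
    κ (a * b) = counit K J a * κ b + κ a * counit K J b := by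
  induction a using MonoidAlgebra.induction_linear with
  | zero => simp
  | add f g hf hg => rw [add_mul, map_add, map_add, map_add, hf, hg]; ring
  | single g r =>
    induction b using MonoidAlgebra.induction_linear with
    | zero => simp
    | add f g hf hg => rw [mul_add, map_add, map_add, map_add, hf, hg]; ring
    | single h s =>
      show κ (MonoidAlgebra.single g r * MonoidAlgebra.single h s) = _
      rw [MonoidAlgebra.single_mul_single, counit_single, counit_single,
        single_eq_smul, single_eq_smul' (K := K) (J := J) g, single_eq_smul' (K := K) (J := J) h,
        map_smul, map_smul, map_smul]
      rcases eq_or_ne g 1 with rfl | hg1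
      · rcases eq_or_ne h 1 with rfl | hh1
        · have : (1 : FreeMonoid (Word J)) * 1 = 1 := one_mul 1
          rw [this]
          have h11 : κ (MonoidAlgebra.single (1 : FreeMonoid (Word J)) (1:K)) = 0 := by
            rw [← MonoidAlgebra.one_def] at *; exact h1
          simp [h11]
        · rw [one_mul]
          simp only [if_neg hh1, if_pos rfl, smul_eq_mul, if_true]
          ring
      · rcases eq_or_ne h 1 with rfl | hh1
        · rw [mul_one]
          have h11 : κ (MonoidAlgebra.single (1 : FreeMonoid (Word J)) (1:K)) = 0 := by
            rw [← MonoidAlgebra.one_def] at *; exact h1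
          simp only [if_neg hg1, if_pos rfl, smul_eq_mul, if_true, h11, mul_zero, zero_add, zero_mul, add_zero]
          ring
        · have hlen : 2 ≤ (FreeMonoid.toList (g * h)).length := by
            rw [toList_single_mul, List.length_append]
            have hg' : (FreeMonoid.toList g).length ≠ 0 := by
              intro hc
              exact hg1 (FreeMonoid.toList.injective (List.eq_nil_of_length_eq_zero hc))
            have hh' : (FreeMonoid.toList h).length ≠ 0 := by
              intro hc
              exact hh1 (FreeMonoid.toList.injective (List.eq_nil_of_length_eq_zero hc))
            omega
          rw [h2 _ hlen]
          simp [hg1, hh1]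

theorem infChar_mul {κ : DT K J →ₗ[K] K} (hκ : IsInfChar K J κ) (a b : DT K J) :
    κ (a * b) = counit K J a * κ b + κ a * counit K J b :=
  kappa_mul_eq hκ.1 (infChar_vanish hκ) a b

/-- Claim 1: `κ(w · x) = κ(w) ε(x)` for an infinitesimal character and a nonempty word `w`. -/
theorem infChar_word_mul {κ : DT K J →ₗ[K] K} (hκ : IsInfChar K J κ) {w : List J}
    (hw : w ≠ []) (x : DT K J) :
    κ (wordElem K J w * x) = κ (wordElem K J w) * counit K J x := by
  rw [infChar_mul hκ]
  have : counit K J (wordElem K J w) = 0 := by rw [counit_wordElem]; simp [hw]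
  rw [this]
  ring

/-- Lemma B: the master evaluation identity. -/
theorem lemmaB {κ ψ : DT K J →ₗ[K] K} (hκ : IsInfChar K J κ) {w : List J} (hw : w ≠ [])
    (v : DT K J) (m : DT K J) :
    LinearMap.mul' K K (TensorProduct.map κ ψ ((wordElem K J w ⊗ₜ[K] v) * delta K J m))
      = κ (wordElem K J w) * ψ (v * m) := by
  have key : ∀ t : DT K J ⊗[K] DT K J,
      LinearMap.mul' K K (TensorProduct.map κ ψ ((wordElem K J w ⊗ₜ[K] v) * t))
        = κ (wordElem K J w) * LinearMap.mul' K K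
            (TensorProduct.map (epsL K J) (ψ.comp (LinearMap.mulLeft K v)) t) := by
    intro t
    induction t with
    | zero => simp
    | add x y hx hy => rw [mul_add, map_add, map_add, map_add, map_add, hx, hy]; ring
    | tmul x y =>
      rw [Algebra.TensorProduct.tmul_mul_tmul, TensorProduct.map_tmul, TensorProduct.map_tmul,
        LinearMap.mul'_apply, LinearMap.mul'_apply, infChar_word_mul hκ hw]
      show _ = _ * (counit K J x * ψ (v * y))
      ring
  rw [key, counit_delta_apply]
  rfl

end Aux3
section Aux4
variable {K : Type} [Field K] {J : Type}

/-- The right-leg word lists appearing in `δ_≺`. -/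
abbrev parts (w : List J) (S : Finset ℕ) : List (List J) :=
  (comps w.length S).map (fun c => c.filterMap (fun i => w[i]?))

/-- The right-leg monomial appearing in `δ_≺` applied to `ofList (a :: as)`. -/
abbrev rightMon (a : Word J) (S : Finset ℕ) (as : List (Word J)) : FreeMonoid (Word J) :=
  barMon (J := J) (parts a.1 S) * FreeMonoid.ofList as

theorem bar_mul_single (ws : List (List J)) (m : FreeMonoid (Word J)) :
    barElem K J ws * MonoidAlgebra.single m 1
      = MonoidAlgebra.single (barMon (J := J) ws * m) 1 := by
  rw [barElem_eq, MonoidAlgebra.single_mul_single, one_mul]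

theorem deg_ofList (l : List (Word J)) :
    deg J (FreeMonoid.ofList l) = (l.map (fun a => a.1.length)).sum := rfl

theorem deg_rightMon (a : Word J) {S : Finset ℕ} (hS : S ⊆ Finset.range a.1.length)
    (as : List (Word J)) :
    deg J (rightMon a S as) = deg J (FreeMonoid.ofList (a :: as)) - S.card := by
  rw [deg_mul, deg_barMon, sum_lengths_comps a.1 hS, deg_ofList, deg_ofList, List.map_cons,
    List.sum_cons]
  have hc := Finset.card_le_card hS
  rw [Finset.card_range] at hc
  omega

theorem deg_rightMon_lt (a : Word J) {S : Finset ℕ} (hS : S ⊆ Finset.range a.1.length)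
    (h0 : 0 ∈ S) (as : List (Word J)) :
    deg J (rightMon a S as) < deg J (FreeMonoid.ofList (a :: as)) := by
  rw [deg_rightMon a hS as]
  have hc : 0 < S.card := Finset.card_pos.2 ⟨0, h0⟩
  have hd : 0 < deg J (FreeMonoid.ofList (a :: as)) := by
    rw [deg_ofList, List.map_cons, List.sum_cons]
    have := List.length_pos_iff.2 a.2
    omega
  omega

/-- Lemma C: the master formula for `κ ≺ ψ` on a basis monomial. -/
theorem lemmaC {κ ψ : DT K J →ₗ[K] K} (hκ : IsInfChar K J κ) (a : Word J)
    (as : List (Word J)) :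
    cprec K J κ ψ (MonoidAlgebra.single (FreeMonoid.ofList (a :: as)) 1)
      = ∑ S ∈ ((Finset.range a.1.length).powerset.filter (fun S => 0 ∈ S)),
          κ (wordElem K J (subword J a.1 S))
            * ψ (MonoidAlgebra.single (rightMon a S as) 1) := by
  rw [cprec, LinearMap.comp_apply, LinearMap.comp_apply, deltaPrec_cons, deltaPrecWord,
    Finset.sum_mul, map_sum, map_sum]
  apply Finset.sum_congr rfl
  intro S hS
  rw [Finset.mem_filter, Finset.mem_powerset] at hS
  rw [lemmaB hκ (subword_ne_nil a.1 hS.1 ⟨0, hS.2⟩), bar_mul_single]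

theorem cprec_one (κ ψ : DT K J →ₗ[K] K) :
    cprec K J κ ψ (MonoidAlgebra.single (1 : FreeMonoid (Word J)) 1) = 0 := by
  rw [cprec, LinearMap.comp_apply, LinearMap.comp_apply, deltaPrec_one, map_zero, map_zero]

theorem epsL_single (g : FreeMonoid (Word J)) (c : K) :
    epsL K J (MonoidAlgebra.single g c) = if g = 1 then c else 0 := counit_single g c

/-- Any solution of the fixed point equation satisfies the recursive evaluation formula. -/
theorem eval_fixed {κ ψ : DT K J →ₗ[K] K} (hκ : IsInfChar K J κ)
    (hfix : ψ = epsL K J + cprec K J κ ψ) (a : Word J) (as : List (Word J)) :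
    ψ (MonoidAlgebra.single (FreeMonoid.ofList (a :: as)) 1)
      = ∑ S ∈ ((Finset.range a.1.length).powerset.filter (fun S => 0 ∈ S)),
          κ (wordElem K J (subword J a.1 S))
            * ψ (MonoidAlgebra.single (rightMon a S as) 1) := by
  conv_lhs => rw [hfix]
  rw [LinearMap.add_apply, epsL_single, if_neg (ofList_ne_one (List.cons_ne_nil a as)),
    zero_add, lemmaC hκ]

theorem fixed_one {κ ψ : DT K J →ₗ[K] K}
    (hfix : ψ = epsL K J + cprec K J κ ψ) :
    ψ (MonoidAlgebra.single (1 : FreeMonoid (Word J)) 1) = 1 := by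
  conv_lhs => rw [hfix]
  rw [LinearMap.add_apply, epsL_single, if_pos rfl, cprec_one, add_zero]

end Aux4
section Aux5
variable {K : Type} [Field K] {J : Type}

theorem lform_ext {ψ₁ ψ₂ : DT K J →ₗ[K] K}
    (h : ∀ g, ψ₁ (MonoidAlgebra.single g 1) = ψ₂ (MonoidAlgebra.single g 1)) : ψ₁ = ψ₂ := by
  apply MonoidAlgebra.lhom_ext'
  intro g
  apply LinearMap.ext_ring
  exact h g

theorem monomial_cases (g : FreeMonoid (Word J)) :
    g = 1 ∨ ∃ (a : Word J) (as : List (Word J)), g = FreeMonoid.ofList (a :: as) := by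
  rcases hl : FreeMonoid.toList g with _ | ⟨a, as⟩
  · left
    exact FreeMonoid.toList.injective (by simp [hl, FreeMonoid.toList_one])
  · right
    exact ⟨a, as, FreeMonoid.toList.injective (by simp [hl])⟩

theorem deg_cons_pos (a : Word J) (as : List (Word J)) :
    0 < deg J (FreeMonoid.ofList (a :: as)) := by
  rw [deg_ofList, List.map_cons, List.sum_cons]
  have := List.length_pos_iff.2 a.2
  omega

theorem fixed_unique {κ ψ₁ ψ₂ : DT K J →ₗ[K] K} (hκ : IsInfChar K J κ)
    (h₁ : ψ₁ = epsL K J + cprec K J κ ψ₁) (h₂ : ψ₂ = epsL K J + cprec K J κ ψ₂) :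
    ψ₁ = ψ₂ := by
  apply lform_ext
  suffices h : ∀ (d : ℕ) (g : FreeMonoid (Word J)), deg J g ≤ d →
      ψ₁ (MonoidAlgebra.single g 1) = ψ₂ (MonoidAlgebra.single g 1) by
    intro g; exact h (deg J g) g le_rfl
  intro d
  induction d with
  | zero =>
    intro g hg
    rcases monomial_cases g with rfl | ⟨a, as, rfl⟩
    · rw [fixed_one h₁, fixed_one h₂]
    · exact absurd hg (by have := deg_cons_pos a as; omega)
  | succ d ih =>
    intro g hg
    rcases monomial_cases g with rfl | ⟨a, as, rfl⟩
    · rw [fixed_one h₁, fixed_one h₂]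
    · rw [eval_fixed hκ h₁ a as, eval_fixed hκ h₂ a as]
      apply Finset.sum_congr rfl
      intro S hS
      rw [Finset.mem_filter, Finset.mem_powerset] at hS
      have := deg_rightMon_lt a hS.1 hS.2 as
      rw [ih _ (by omega)]

theorem precPow_succ (κ : DT K J →ₗ[K] K) (n : ℕ) :
    precPow K J κ (n + 1) = cprec K J κ (precPow K J κ n) := rfl

theorem precPow_vanish {κ : DT K J →ₗ[K] K} (hκ : IsInfChar K J κ) :
    ∀ (n : ℕ) (g : FreeMonoid (Word J)), deg J g < n →
      precPow K J κ n (MonoidAlgebra.single g 1) = 0 := by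
  intro n
  induction n with
  | zero => intro g h; omega
  | succ n ih =>
    intro g h
    rcases monomial_cases g with rfl | ⟨a, as, rfl⟩
    · rw [precPow_succ, cprec_one]
    · rw [precPow_succ, lemmaC hκ]
      apply Finset.sum_eq_zero
      intro S hS
      rw [Finset.mem_filter, Finset.mem_powerset] at hS
      have h1 := deg_rightMon_lt a hS.1 hS.2 as
      rw [ih _ (by omega), mul_zero]

theorem expPrec_single (κ : DT K J →ₗ[K] K) (g : FreeMonoid (Word J)) :
    expPrec K J κ (MonoidAlgebra.single g 1)
      = ∑ n ∈ Finset.range (deg J g + 1), precPow K J κ n (MonoidAlgebra.single g 1) := by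
  rw [expPrec, extend_single, one_smul]

theorem expPrec_fixed {κ : DT K J →ₗ[K] K} (hκ : IsInfChar K J κ) :
    expPrec K J κ = epsL K J + cprec K J κ (expPrec K J κ) := by
  apply lform_ext
  intro g
  rcases monomial_cases g with rfl | ⟨a, as, rfl⟩
  · rw [expPrec_single, deg_one, Finset.sum_range_one, LinearMap.add_apply, cprec_one, add_zero]
    rfl
  · set d := deg J (FreeMonoid.ofList (a :: as)) with hd
    rw [expPrec_single, LinearMap.add_apply, epsL_single,
      if_neg (ofList_ne_one (List.cons_ne_nil a as)), zero_add, lemmaC hκ, ← hd,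
      Finset.sum_range_succ']
    have h0 : precPow K J κ 0 (MonoidAlgebra.single (FreeMonoid.ofList (a :: as)) 1) = 0 := by
      show epsL K J _ = 0
      rw [epsL_single, if_neg (ofList_ne_one (List.cons_ne_nil a as))]
    rw [h0, add_zero]
    calc ∑ n ∈ Finset.range d,
          precPow K J κ (n+1) (MonoidAlgebra.single (FreeMonoid.ofList (a :: as)) 1)
        = ∑ n ∈ Finset.range d,
            ∑ S ∈ ((Finset.range a.1.length).powerset.filter (fun S => 0 ∈ S)),
              κ (wordElem K J (subword J a.1 S))
                * precPow K J κ n (MonoidAlgebra.single (rightMon a S as) 1) := by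
          apply Finset.sum_congr rfl
          intro n _
          rw [precPow_succ, lemmaC hκ]
      _ = ∑ S ∈ ((Finset.range a.1.length).powerset.filter (fun S => 0 ∈ S)),
            ∑ n ∈ Finset.range d,
              κ (wordElem K J (subword J a.1 S))
                * precPow K J κ n (MonoidAlgebra.single (rightMon a S as) 1) :=
          Finset.sum_comm
      _ = ∑ S ∈ ((Finset.range a.1.length).powerset.filter (fun S => 0 ∈ S)),
            κ (wordElem K J (subword J a.1 S))
              * expPrec K J κ (MonoidAlgebra.single (rightMon a S as) 1) := by
          apply Finset.sum_congr rfl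
          intro S hS
          rw [Finset.mem_filter, Finset.mem_powerset] at hS
          have hlt := deg_rightMon_lt a hS.1 hS.2 as
          rw [expPrec_single, Finset.mul_sum]
          refine (Finset.sum_subset ?_ ?_).symm
          · intro x hx
            rw [Finset.mem_range] at *
            omega
          · intro x _ hx
            rw [Finset.mem_range] at hx
            rw [precPow_vanish hκ x _ (by omega), mul_zero]
end Aux5
section Aux6
variable {K : Type} [Field K] {J : Type}

theorem fixed_isChar {κ ψ : DT K J →ₗ[K] K} (hκ : IsInfChar K J κ)
    (hfix : ψ = epsL K J + cprec K J κ ψ) : IsChar K J ψ := by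
  have hmon : ∀ (d : ℕ) (g : FreeMonoid (Word J)), deg J g ≤ d → ∀ h : FreeMonoid (Word J),
      ψ (MonoidAlgebra.single (g * h) 1)
        = ψ (MonoidAlgebra.single g 1) * ψ (MonoidAlgebra.single h 1) := by
    intro d
    induction d with
    | zero =>
      intro g hg h
      rcases monomial_cases g with rfl | ⟨a, as, rfl⟩
      · rw [one_mul, fixed_one hfix, one_mul]
      · exact absurd hg (by have := deg_cons_pos a as; omega)
    | succ d ih =>
      intro g hg h
      rcases monomial_cases g with rfl | ⟨a, as, rfl⟩
      · rw [one_mul, fixed_one hfix, one_mul]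
      · have hsplit : FreeMonoid.ofList (a :: as) * h
            = FreeMonoid.ofList (a :: (as ++ FreeMonoid.toList h)) := by
          apply FreeMonoid.toList.injective
          simp [toList_single_mul]
        rw [hsplit, eval_fixed hκ hfix a (as ++ FreeMonoid.toList h), eval_fixed hκ hfix a as,
          Finset.sum_mul]
        apply Finset.sum_congr rfl
        intro S hS
        rw [Finset.mem_filter, Finset.mem_powerset] at hS
        have hr : rightMon a S (as ++ FreeMonoid.toList h) = rightMon a S as * h := by
          apply FreeMonoid.toList.injective
          simp [rightMon, toList_single_mul]
        rw [hr, ih (rightMon a S as)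
          (by have := deg_rightMon_lt a hS.1 hS.2 as; omega) h]
        ring
  constructor
  · rw [show (1 : DT K J) = MonoidAlgebra.single 1 1 from MonoidAlgebra.one_def, fixed_one hfix]
  · intro x y
    induction x using MonoidAlgebra.induction_linear with
    | zero => simp
    | add f g hf hg => rw [add_mul, map_add, map_add, hf, hg]; ring
    | single g r =>
      induction y using MonoidAlgebra.induction_linear with
      | zero => simp
      | add f g' hf hg => rw [mul_add, map_add, map_add, hf, hg]; ring
      | single h s =>
        show ψ (MonoidAlgebra.single g r * MonoidAlgebra.single h s) = _
        rw [MonoidAlgebra.single_mul_single, single_eq_smul, map_smul,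
          hmon (deg J g) g le_rfl h, single_eq_smul' (K := K) (J := J) g r,
          single_eq_smul' (K := K) (J := J) h s, map_smul, map_smul]
        simp only [smul_eq_mul]
        ring
end Aux6
section Aux7
variable {K : Type} [Field K] {J : Type}

theorem subword_length_lt {w : List J} {S : Finset ℕ}
    (hsub : S ⊆ Finset.range w.length) (hne : S ≠ Finset.range w.length) :
    (subword J w S).length < w.length := by
  rw [subword_length w hsub]
  have := Finset.card_lt_card (lt_of_le_of_ne hsub hne)
  rwa [Finset.card_range] at this

end Aux7

/-- Recursive construction of the infinitesimal character associated to `φ`. -/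
def kapFun (K : Type) [Field K] {J : Type} (φ : DT K J →ₗ[K] K) : List J → K
  | w =>
    φ (wordElem K J w) -
      ∑ S ∈ ((Finset.range w.length).powerset.filter
          (fun S => 0 ∈ S ∧ S ≠ Finset.range w.length)).attach,
        kapFun K φ (subword J w S.1) * φ (barElem K J (parts w S.1))
  termination_by w => w.length
  decreasing_by
    have hS := S.2
    rw [Finset.mem_filter, Finset.mem_powerset] at hS
    exact subword_length_lt hS.1 hS.2.2

/-- Auxiliary: value on a list of words. -/
def kapAux (K : Type) [Field K] {J : Type} (φ : DT K J →ₗ[K] K) : List (Word J) → K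
  | [a] => kapFun K φ a.1
  | _ => 0

/-- The linear form extending `kapFun` on single words, `0` elsewhere. -/
def kapConstr (K : Type) [Field K] {J : Type} (φ : DT K J →ₗ[K] K) : DT K J →ₗ[K] K :=
  extend K J (fun g => kapAux K φ (FreeMonoid.toList g))

section Aux8
variable {K : Type} [Field K] {J : Type}

theorem kapConstr_word (φ : DT K J →ₗ[K] K) (a : Word J) :
    kapConstr K φ (MonoidAlgebra.single (FreeMonoid.of a) 1) = kapFun K φ a.1 := by
  rw [kapConstr, extend_single, one_smul]
  rfl

theorem kapConstr_one (φ : DT K J →ₗ[K] K) :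
    kapConstr K φ (MonoidAlgebra.single (1 : FreeMonoid (Word J)) 1) = 0 := by
  rw [kapConstr, extend_single, one_smul]
  rfl

theorem kapConstr_long (φ : DT K J →ₗ[K] K) (g : FreeMonoid (Word J))
    (hg : 2 ≤ (FreeMonoid.toList g).length) :
    kapConstr K φ (MonoidAlgebra.single g 1) = 0 := by
  rw [kapConstr, extend_single, one_smul]
  rcases hl : FreeMonoid.toList g with _ | ⟨a, _ | ⟨b, rest⟩⟩
  · rw [hl] at hg; simp at hg
  · rw [hl] at hg; simp at hg
  · rfl

theorem kapConstr_isInfChar (φ : DT K J →ₗ[K] K) : IsInfChar K J (kapConstr K φ) := by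
  have h1 : kapConstr K φ 1 = 0 := by
    rw [show (1 : DT K J) = MonoidAlgebra.single 1 1 from MonoidAlgebra.one_def, kapConstr_one]
  refine ⟨h1, fun a b ha hb => ?_⟩
  rw [kappa_mul_eq h1 (kapConstr_long φ) a b, ha, hb]
  ring

theorem wordElem_val (a : Word J) :
    wordElem K J a.1 = MonoidAlgebra.single (FreeMonoid.of a) 1 := by
  rw [wordElem_cons a.2]

theorem barElem_parts_full (w : List J) : barElem K J (parts w (Finset.range w.length)) = 1 := by
  rw [show parts w (Finset.range w.length) = [] from by rw [parts, comps_full, List.map_nil]]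
  rfl

theorem kapConstr_fixed {φ : DT K J →ₗ[K] K} (hφ : IsChar K J φ) :
    φ = epsL K J + cprec K J (kapConstr K φ) φ := by
  have hκ := kapConstr_isInfChar φ
  apply lform_ext
  intro g
  rcases monomial_cases g with rfl | ⟨a, as, rfl⟩
  · rw [LinearMap.add_apply, epsL_single, if_pos rfl, cprec_one, add_zero,
      ← MonoidAlgebra.one_def, hφ.1]
  · rw [LinearMap.add_apply, epsL_single, if_neg (ofList_ne_one (List.cons_ne_nil a as)),
      zero_add, lemmaC hκ]
    symm
    have hlen : 0 < a.1.length := List.length_pos_iff.2 a.2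
    have hfull : Finset.range a.1.length
        ∈ (Finset.range a.1.length).powerset.filter (fun S => 0 ∈ S) := by
      rw [Finset.mem_filter, Finset.mem_powerset]
      exact ⟨le_rfl, Finset.mem_range.2 hlen⟩
    calc ∑ S ∈ (Finset.range a.1.length).powerset.filter (fun S => 0 ∈ S),
          kapConstr K φ (wordElem K J (subword J a.1 S))
            * φ (MonoidAlgebra.single (rightMon a S as) 1)
        = (∑ S ∈ (Finset.range a.1.length).powerset.filter (fun S => 0 ∈ S),
            kapConstr K φ (wordElem K J (subword J a.1 S)) * φ (barElem K J (parts a.1 S)))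
            * φ (MonoidAlgebra.single (FreeMonoid.ofList as) 1) := by
          rw [Finset.sum_mul]
          apply Finset.sum_congr rfl
          intro S _
          rw [← bar_mul_single, hφ.2]
          ring
      _ = φ (wordElem K J a.1) * φ (MonoidAlgebra.single (FreeMonoid.ofList as) 1) := by
          congr 1
          rw [← Finset.add_sum_erase _ _ hfull, subword_full, barElem_parts_full, hφ.1, mul_one]
          have herase : ((Finset.range a.1.length).powerset.filter (fun S => 0 ∈ S)).erase
                (Finset.range a.1.length)
              = (Finset.range a.1.length).powerset.filter
                  (fun S => 0 ∈ S ∧ S ≠ Finset.range a.1.length) := by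
            ext S
            rw [Finset.mem_erase, Finset.mem_filter, Finset.mem_filter]
            tauto
          rw [herase]
          conv_lhs => rw [wordElem_val a, kapConstr_word, kapFun]
          rw [Finset.sum_attach _ (fun S => kapFun K φ (subword J a.1 S)
            * φ (barElem K J (parts a.1 S)))]
          have hterm : ∀ S ∈ (Finset.range a.1.length).powerset.filter
              (fun S => 0 ∈ S ∧ S ≠ Finset.range a.1.length),
              kapConstr K φ (wordElem K J (subword J a.1 S)) * φ (barElem K J (parts a.1 S))
                = kapFun K φ (subword J a.1 S) * φ (barElem K J (parts a.1 S)) := by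
            intro S hS
            rw [Finset.mem_filter, Finset.mem_powerset] at hS
            have hne : subword J a.1 S ≠ [] := subword_ne_nil a.1 hS.1 ⟨0, hS.2.1⟩
            rw [wordElem_cons hne, kapConstr_word φ ⟨subword J a.1 S, hne⟩]
          rw [Finset.sum_congr rfl hterm]
          ring
      _ = φ (MonoidAlgebra.single (FreeMonoid.ofList (a :: as)) 1) := by
          rw [wordElem_val a, ← hφ.2, MonoidAlgebra.single_mul_single, one_mul]
          rfl

theorem infchar_unique {φ κ₁ κ₂ : DT K J →ₗ[K] K} (h1 : IsInfChar K J κ₁)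
    (h2 : IsInfChar K J κ₂) (hf1 : φ = epsL K J + cprec K J κ₁ φ)
    (hf2 : φ = epsL K J + cprec K J κ₂ φ) : κ₁ = κ₂ := by
  have hword : ∀ (n : ℕ) (w : List J) (hw : w ≠ []), w.length ≤ n →
      κ₁ (wordElem K J w) = κ₂ (wordElem K J w) := by
    intro n
    induction n with
    | zero =>
      intro w hw hl
      exact absurd hl (by have := List.length_pos_iff.2 hw; omega)
    | succ n ih =>
      intro w hw hl
      set a : Word J := ⟨w, hw⟩ with ha
      have e1 := eval_fixed h1 hf1 a []
      have e2 := eval_fixed h2 hf2 a []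
      rw [e2] at e1
      have hlen : 0 < a.1.length := List.length_pos_iff.2 a.2
      have hfull : Finset.range a.1.length
          ∈ (Finset.range a.1.length).powerset.filter (fun S => 0 ∈ S) := by
        rw [Finset.mem_filter, Finset.mem_powerset]
        exact ⟨le_rfl, Finset.mem_range.2 hlen⟩
      rw [← Finset.add_sum_erase _ _ hfull, ← Finset.add_sum_erase _ _ hfull] at e1
      have hrest : ∀ S ∈ ((Finset.range a.1.length).powerset.filter (fun S => 0 ∈ S)).erase
          (Finset.range a.1.length),
          κ₁ (wordElem K J (subword J a.1 S)) * φ (MonoidAlgebra.single (rightMon a S []) 1)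
            = κ₂ (wordElem K J (subword J a.1 S))
              * φ (MonoidAlgebra.single (rightMon a S []) 1) := by
        intro S hS
        rw [Finset.mem_erase, Finset.mem_filter, Finset.mem_powerset] at hS
        have hne : subword J a.1 S ≠ [] := subword_ne_nil a.1 hS.2.1 ⟨0, hS.2.2⟩
        have hlt := subword_length_lt hS.2.1 hS.1
        have hlw : a.1.length = w.length := rfl
        rw [ih _ hne (by omega)]
      rw [Finset.sum_congr rfl hrest] at e1
      have e3 := add_right_cancel e1
      have hpartsfull : parts a.1 (Finset.range a.1.length) = [] := by
        rw [parts, comps_full, List.map_nil]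
      have hone : rightMon a (Finset.range a.1.length) [] = 1 := by
        rw [rightMon, hpartsfull]
        rfl
      rw [subword_full, hone, fixed_one hf1, mul_one, mul_one] at e3
      exact e3.symm
  apply lform_ext
  intro g
  rcases monomial_cases g with rfl | ⟨a, as, rfl⟩
  · rw [← MonoidAlgebra.one_def, h1.1, h2.1]
  · rcases as with _ | ⟨b, rest⟩
    · have hof : FreeMonoid.ofList [a] = FreeMonoid.of a := rfl
      rw [hof, ← wordElem_val a, hword a.1.length a.1 a.2 le_rfl]
    · have hlen : 2 ≤ (FreeMonoid.toList (FreeMonoid.ofList (a :: b :: rest))).length := by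
        simp
      rw [infChar_vanish h1 _ hlen, infChar_vanish h2 _ hlen]

end Aux8
/-- The left half-shuffle fixed point equation `φ = ε + κ ≺ φ` gives a
natural bijection between characters and infinitesimal characters on `T̄(T(J))`:
every character `φ` determines a unique infinitesimal character `κ` with
`φ = ε + κ ≺ φ` (equivalently `φ = exp^≺(κ)`), and conversely `exp^≺(κ)` is a character
for every infinitesimal character `κ`. -/
theorem characters_infinitesimal_characters_bijection :
    -- for every character there is a unique infinitesimal character solving the
    -- fixed point equation
    (∀ φ : DT K J →ₗ[K] K, IsChar K J φ →
      ∃! κ : DT K J →ₗ[K] K, IsInfChar K J κ ∧ φ = epsL K J + cprec K J κ φ)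
    ∧ -- the fixed point equation is equivalent to the ordered exponential formula
    (∀ φ κ : DT K J →ₗ[K] K, IsChar K J φ → IsInfChar K J κ →
      (φ = epsL K J + cprec K J κ φ ↔ φ = expPrec K J κ))
    ∧ -- conversely, the ordered exponential of an infinitesimal character is a character
    (∀ κ : DT K J →ₗ[K] K, IsInfChar K J κ → IsChar K J (expPrec K J κ)) := by
  refine ⟨?_, ?_, ?_⟩
  · intro φ hφ
    refine ⟨kapConstr K φ, ⟨kapConstr_isInfChar φ, kapConstr_fixed hφ⟩, ?_⟩
    intro κ' hκ'
    exact infchar_unique hκ'.1 (kapConstr_isInfChar φ) hκ'.2 (kapConstr_fixed hφ)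
  · intro φ κ hφ hκ
    constructor
    · intro hfix
      exact fixed_unique hκ hfix (expPrec_fixed hκ)
    · intro h
      rw [h]
      exact expPrec_fixed hκ
  · intro κ hκ
    exact fixed_isChar hκ (expPrec_fixed hκ)
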